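/- Let A be an N×N Metzler matrix that is Hurwitz stable (all eigenvalues have negative real part). Then A is diagonally stable: there exists a diagonal matrix D with positive diagonal entries such that AᵀD + DA is negative definite. -/

import Mathlib

open Matrix

section Aux

variable {N : ℕ}

private lemma mul_entry_nonneg'' {X Y : Matrix (Fin N) (Fin N) ℝ}
    (hX : ∀ i j, 0 ≤ X i j) (hY : ∀ i j, 0 ≤ Y i j) : ∀ i j, 0 ≤ (X * Y) i j := by
  intro i j
  rw [Matrix.mul_apply]
  exact Finset.sum_nonneg fun k _ => mul_nonneg (hX i k) (hY k j)

private lemma pow_entry_nonneg'' {X : Matrix (Fin N) (Fin N) ℝ}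
    (hX : ∀ i j, 0 ≤ X i j) : ∀ (n : ℕ) (i j : Fin N), 0 ≤ (X ^ n) i j := by
  intro n
  induction n with
  | zero => intro i j; simp [Matrix.one_apply]; split <;> norm_num
  | succ n ih =>
      rw [pow_succ]
      exact mul_entry_nonneg'' ih hX

/-- determinant nonvanishing on the nonnegative reals, from the Hurwitz property -/
private lemma det_ne_of_hurwitz'' {A : Matrix (Fin N) (Fin N) ℝ}
    (hHurwitz : ∀ μ ∈ spectrum ℂ (A.map (Complex.ofReal)), μ.re < 0)
    {s : ℝ} (hs : 0 ≤ s) : (s • (1 : Matrix (Fin N) (Fin N) ℝ) - A).det ≠ 0 := by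
  intro h0
  have hmap : (s • (1 : Matrix (Fin N) (Fin N) ℝ) - A).map Complex.ofReal
      = (s : ℂ) • (1 : Matrix (Fin N) (Fin N) ℂ) - A.map Complex.ofReal := by
    ext i j
    simp [Matrix.map_apply, Matrix.smul_apply, Matrix.sub_apply, Matrix.one_apply, apply_ite]
  have hdetC : ((s : ℂ) • (1 : Matrix (Fin N) (Fin N) ℂ) - A.map Complex.ofReal).det = 0 := by
    have : (s • (1 : Matrix (Fin N) (Fin N) ℝ) - A).map Complex.ofReal
        = (Complex.ofRealHom).mapMatrix (s • (1 : Matrix (Fin N) (Fin N) ℝ) - A) := rfl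
    rw [← hmap, this, ← RingHom.map_det]
    simp [h0]
  have hmem : (s : ℂ) ∈ spectrum ℂ (A.map Complex.ofReal) := by
    rw [spectrum.mem_iff]
    rw [Algebra.algebraMap_eq_smul_one]
    rw [Matrix.isUnit_iff_isUnit_det, hdetC]
    simp
  have := hHurwitz _ hmem
  simp at this
  linarith

/-- uniform entrywise bound for the resolvent on a compact interval -/
private lemma resolvent_bound'' (A : Matrix (Fin N) (Fin N) ℝ) {c : ℝ} (hc : 0 ≤ c)
    (hdet : ∀ s ∈ Set.Icc (0:ℝ) c, (s • (1 : Matrix (Fin N) (Fin N) ℝ) - A).det ≠ 0) :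
    ∃ K : ℝ, 0 ≤ K ∧ ∀ s ∈ Set.Icc (0:ℝ) c,
      (∑ i, ∑ j, |((s • (1 : Matrix (Fin N) (Fin N) ℝ) - A)⁻¹) i j|) ≤ K := by
  set M : ℝ → Matrix (Fin N) (Fin N) ℝ := fun s => s • (1 : Matrix (Fin N) (Fin N) ℝ) - A with hM
  have hMc : Continuous M := (continuous_id.smul continuous_const).sub continuous_const
  have hφ : ContinuousOn (fun s => ∑ i, ∑ j, |((M s)⁻¹) i j|) (Set.Icc 0 c) := by
    apply continuousOn_finset_sum
    intro i _
    apply continuousOn_finset_sum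
    intro j _
    have h1 : ContinuousOn (fun s => ((M s)⁻¹) i j) (Set.Icc 0 c) := by
      have : ∀ s, ((M s)⁻¹) i j = (M s).det⁻¹ * (M s).adjugate i j := by
        intro s
        rw [Matrix.inv_def, Matrix.smul_apply, Ring.inverse_eq_inv', smul_eq_mul]
      simp only [this]
      exact ((hMc.matrix_det.continuousOn).inv₀ hdet).mul
        ((hMc.matrix_adjugate.matrix_elem i j).continuousOn)
    exact h1.abs
  obtain ⟨s₀, hs₀, hmax⟩ := isCompact_Icc.exists_isMaxOn (Set.nonempty_Icc.mpr hc) hφ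
  refine ⟨_, ?_, fun s hs => hmax hs⟩
  exact Finset.sum_nonneg fun i _ => Finset.sum_nonneg fun j _ => abs_nonneg _

private lemma quad_neg'' {Q : Matrix (Fin N) (Fin N) ℝ} {x : Fin N → ℝ}
    (hsym : ∀ i j, Q i j = Q j i) (hoff : ∀ i j, i ≠ j → 0 ≤ Q i j)
    (hx : ∀ i, 0 < x i) (hQx : ∀ i, (Q *ᵥ x) i < 0) :
    ∀ v : Fin N → ℝ, v ≠ 0 → v ⬝ᵥ (Q *ᵥ v) < 0 := by
  intro v hv
  set u : Fin N → ℝ := fun i => v i / x i with hu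
  have hvu : ∀ i, v i = x i * u i := by
    intro i
    rw [hu]
    field_simp [(hx i).ne']
  set W : ℝ := v ⬝ᵥ (Q *ᵥ v) with hW
  set S1 : ℝ := ∑ i, (Q *ᵥ x) i * (x i * u i ^ 2) with hS1
  set T : ℝ := ∑ i, ∑ j, Q i j * x i * x j * (u i - u j) ^ 2 with hT
  have hWsum : W = ∑ i, ∑ j, Q i j * (x i * u i) * (x j * u j) := by
    rw [hW, dotProduct]
    apply Finset.sum_congr rfl
    intro i _
    rw [Matrix.mulVec, dotProduct, Finset.mul_sum]
    apply Finset.sum_congr rfl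
    intro j _
    rw [← hvu i, ← hvu j]
    ring
  have hS1sum : S1 = ∑ i, ∑ j, Q i j * x i * x j * u i ^ 2 := by
    rw [hS1]
    apply Finset.sum_congr rfl
    intro i _
    rw [Matrix.mulVec, dotProduct, Finset.sum_mul]
    apply Finset.sum_congr rfl
    intro j _
    ring
  have hswap : (∑ i, ∑ j, Q i j * x i * x j * u j ^ 2)
      = ∑ i, ∑ j, Q i j * x i * x j * u i ^ 2 := by
    rw [Finset.sum_comm]
    apply Finset.sum_congr rfl
    intro i _
    apply Finset.sum_congr rfl
    intro j _
    rw [hsym j i]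
    ring
  have hident : T = 2 * S1 - 2 * W := by
    have hterm : ∀ i j, Q i j * x i * x j * (u i - u j) ^ 2
        = Q i j * x i * x j * u i ^ 2 + Q i j * x i * x j * u j ^ 2
          - 2 * (Q i j * (x i * u i) * (x j * u j)) := by
      intro i j
      ring
    calc T = ∑ i, ∑ j, (Q i j * x i * x j * u i ^ 2 + Q i j * x i * x j * u j ^ 2
          - 2 * (Q i j * (x i * u i) * (x j * u j))) := by
          rw [hT]
          exact Finset.sum_congr rfl fun i _ => Finset.sum_congr rfl fun j _ => hterm i j
      _ = (∑ i, ∑ j, Q i j * x i * x j * u i ^ 2) + (∑ i, ∑ j, Q i j * x i * x j * u j ^ 2)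
          - 2 * ∑ i, ∑ j, Q i j * (x i * u i) * (x j * u j) := by
          simp only [Finset.sum_add_distrib, Finset.sum_sub_distrib, Finset.mul_sum]
      _ = 2 * S1 - 2 * W := by
          rw [hswap, hS1sum, hWsum]
          ring
  have hT0 : 0 ≤ T := by
    apply Finset.sum_nonneg
    intro i _
    apply Finset.sum_nonneg
    intro j _
    by_cases hij : i = j
    · subst hij; simp
    · have h1 := hoff i j hij
      have h2 := (hx i).le
      have h3 := (hx j).le
      positivity
  obtain ⟨i0, hi0⟩ := Function.ne_iff.mp hv
  have hu0 : u i0 ≠ 0 := by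
    rw [hu]
    exact div_ne_zero hi0 (hx i0).ne'
  have hS1neg : S1 < 0 := by
    rw [hS1]
    have := Finset.sum_lt_sum (f := fun i => (Q *ᵥ x) i * (x i * u i ^ 2))
      (g := fun _ => (0:ℝ))
      (fun i _ => mul_nonpos_of_nonpos_of_nonneg (hQx i).le
        (mul_nonneg (hx i).le (sq_nonneg _)))
      ⟨i0, Finset.mem_univ i0, mul_neg_of_neg_of_pos (hQx i0)
        (mul_pos (hx i0) (lt_of_le_of_ne (sq_nonneg _) (Ne.symm (pow_ne_zero 2 hu0))))⟩
    simpa using this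
  linarith

end Aux

section NormSection

attribute [local instance] Matrix.linftyOpNormedRing Matrix.linftyOpNormedSpace
  Matrix.linftyOpNormedAlgebra

variable {N : ℕ}

private noncomputable instance : CompleteSpace (Matrix (Fin N) (Fin N) ℝ) :=
  FiniteDimensional.complete ℝ _

private lemma norm_le_entry_sum'' (X : Matrix (Fin N) (Fin N) ℝ) :
    ‖X‖ ≤ ∑ i, ∑ j, |X i j| := by
  rw [Matrix.linfty_opNorm_def]
  have h1 : (Finset.univ.sup fun i => ∑ j, ‖X i j‖₊) ≤ ∑ i, ∑ j, ‖X i j‖₊ := by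
    apply Finset.sup_le
    intro i hi
    exact Finset.single_le_sum (f := fun i => ∑ j, ‖X i j‖₊) (fun k _ => zero_le) hi
  calc ((Finset.univ.sup fun i => ∑ j, ‖X i j‖₊ : NNReal) : ℝ)
      ≤ ((∑ i, ∑ j, ‖X i j‖₊ : NNReal) : ℝ) := by exact_mod_cast h1
    _ = ∑ i, ∑ j, |X i j| := by
        push_cast
        simp [Real.norm_eq_abs]

private lemma geom_inv_nonneg'' {X : Matrix (Fin N) (Fin N) ℝ}
    (hX : ∀ i j, 0 ≤ X i j) (hn : ‖X‖ < 1) :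
    ∃ Y : Matrix (Fin N) (Fin N) ℝ, (1 - X) * Y = 1 ∧ ∀ i j, 0 ≤ Y i j := by
  refine ⟨∑' n : ℕ, X ^ n, mul_neg_geom_series X hn, ?_⟩
  intro i j
  have hsum : Summable (fun n : ℕ => X ^ n) := summable_geometric_of_norm_lt_one hn
  have hentry : (∑' n : ℕ, X ^ n) i j = ∑' n : ℕ, (X ^ n) i j := by
    let f : Matrix (Fin N) (Fin N) ℝ →ₗ[ℝ] ℝ :=
      { toFun := fun M => M i j
        map_add' := fun a b => rfl
        map_smul' := fun r a => rfl }
    have hf : Continuous f := f.continuous_of_finiteDimensional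
    exact (ContinuousLinearMap.map_tsum ⟨f, hf⟩ hsum : _)
  rw [hentry]
  exact tsum_nonneg fun n => pow_entry_nonneg'' hX n i j

/-- main lemma: inverse of `-A` is entrywise nonnegative -/
private lemma neg_inv_nonneg'' {A : Matrix (Fin N) (Fin N) ℝ}
    (hMetzler : ∀ i j, i ≠ j → 0 ≤ A i j)
    (hdet : ∀ s : ℝ, 0 ≤ s → (s • (1 : Matrix (Fin N) (Fin N) ℝ) - A).det ≠ 0) :
    ∃ R : Matrix (Fin N) (Fin N) ℝ, (-A) * R = 1 ∧ ∀ i j, 0 ≤ R i j := by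
  classical
  set σ : ℝ := 1 + ∑ k, |A k k| with hσdef
  have hσ1 : 1 ≤ σ := by
    have : 0 ≤ ∑ k, |A k k| := Finset.sum_nonneg fun k _ => abs_nonneg _
    simp [hσdef]; linarith
  set B : Matrix (Fin N) (Fin N) ℝ := A + σ • 1 with hBdef
  have hB : ∀ i j, 0 ≤ B i j := by
    intro i j
    by_cases hij : i = j
    · subst hij
      have h1 : |A i i| ≤ ∑ k, |A k k| :=
        Finset.single_le_sum (f := fun k => |A k k|) (fun k _ => abs_nonneg _) (Finset.mem_univ i)
      have h2 : -A i i ≤ |A i i| := neg_le_abs _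
      simp [hBdef, Matrix.add_apply, Matrix.smul_apply, Matrix.one_apply, hσdef]
      linarith
    · simp [hBdef, Matrix.add_apply, Matrix.smul_apply, Matrix.one_apply, hij]
      exact hMetzler i j hij
  set t : ℝ := ‖B‖ + 1 + σ with htdef
  have ht0 : 0 < t := by have := norm_nonneg B; linarith
  set c : ℝ := ‖B‖ + 1 with hcdef
  have hc0 : 0 < c := by have := norm_nonneg B; linarith
  let Good : ℝ → Prop := fun s =>
    ∃ R : Matrix (Fin N) (Fin N) ℝ,
      (s • (1 : Matrix (Fin N) (Fin N) ℝ) - A) * R = 1 ∧ ∀ i j, 0 ≤ R i j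
  have good_c : Good c := by
    have hX : ∀ i j, 0 ≤ (t⁻¹ • B) i j := fun i j => by
      have := hB i j
      simp [Matrix.smul_apply]
      positivity
    have hXn : ‖t⁻¹ • B‖ < 1 := by
      rw [norm_smul, Real.norm_eq_abs, abs_of_pos (inv_pos.mpr ht0)]
      have he : t⁻¹ * ‖B‖ = ‖B‖ / t := by ring
      rw [he, div_lt_one ht0]
      linarith
    obtain ⟨Y, hY1, hY0⟩ := geom_inv_nonneg'' hX hXn
    refine ⟨t⁻¹ • Y, ?_, fun i j => by
      have := hY0 i j; simp [Matrix.smul_apply]; positivity⟩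
    have hfact : c • (1 : Matrix (Fin N) (Fin N) ℝ) - A
        = t • ((1 : Matrix (Fin N) (Fin N) ℝ) - t⁻¹ • B) := by
      rw [smul_sub, smul_inv_smul₀ ht0.ne']
      rw [hBdef, hcdef, htdef]
      module
    rw [hfact, smul_mul_assoc, mul_smul_comm, smul_smul, mul_inv_cancel₀ ht0.ne', one_smul, hY1]
  obtain ⟨K, hK0, hKb⟩ := resolvent_bound'' A hc0.le fun s hs => hdet s hs.1
  set δ : ℝ := 1 / (2 * (K + 1)) with hδdef
  have hδ0 : 0 < δ := by positivity
  have hδK : δ * K < 1 := by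
    rw [hδdef, div_mul_eq_mul_div, one_mul, div_lt_one (by positivity)]
    linarith
  have step : ∀ s h : ℝ, 0 ≤ s → s ≤ c → 0 ≤ h → h ≤ δ → Good s → Good (s - h) := by
    rintro s h hs0 hsc hh0 hhδ ⟨R, hR1, hR0⟩
    have hRinv : (s • (1 : Matrix (Fin N) (Fin N) ℝ) - A)⁻¹ = R :=
      Matrix.inv_eq_right_inv hR1
    have hRn : ‖R‖ ≤ K := by
      calc ‖R‖ ≤ ∑ i, ∑ j, |R i j| := norm_le_entry_sum'' R
        _ ≤ K := by rw [← hRinv]; exact hKb s ⟨hs0, hsc⟩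
    have hX0 : ∀ i j, 0 ≤ (h • R) i j := fun i j => by
      have := hR0 i j; simp [Matrix.smul_apply]; positivity
    have hXn : ‖h • R‖ < 1 := by
      rw [norm_smul]
      calc ‖h‖ * ‖R‖ ≤ δ * K := by
            apply mul_le_mul _ hRn (norm_nonneg _) hδ0.le
            rw [Real.norm_eq_abs, abs_of_nonneg hh0]; exact hhδ
        _ < 1 := hδK
    obtain ⟨Y, hY1, hY0⟩ := geom_inv_nonneg'' hX0 hXn
    refine ⟨Y * R, ?_, mul_entry_nonneg'' hY0 hR0⟩
    have hfact : (s - h) • (1 : Matrix (Fin N) (Fin N) ℝ) - A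
        = (s • (1 : Matrix (Fin N) (Fin N) ℝ) - A) * (1 - h • R) := by
      rw [mul_sub, mul_one, mul_smul_comm, hR1, sub_smul]
      module
    rw [hfact, mul_assoc, ← mul_assoc (1 - h • R), hY1, one_mul, hR1]
  have hmaxkey : ∀ a : ℝ, max a 0 - δ ≤ max (a - δ) 0 := by
    intro a
    rcases le_total a δ with h | h
    · have h1 : max a 0 ≤ δ := max_le (by linarith) hδ0.le
      have h2 : (0:ℝ) ≤ max (a - δ) 0 := le_max_right _ _
      linarith
    · have h1 : max a 0 = a := max_eq_left (by linarith)
      have h2 : a - δ ≤ max (a - δ) 0 := le_max_left _ _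
      linarith
  have main : ∀ n : ℕ, Good (max (c - n * δ) 0) := by
    intro n
    induction n with
    | zero => simpa [max_eq_left hc0.le] using good_c
    | succ n ih =>
        set s : ℝ := max (c - n * δ) 0 with hs
        set s' : ℝ := max (c - (n + 1) * δ) 0 with hs'
        have hss' : s' ≤ s := by
          apply max_le_max _ le_rfl
          have : (n : ℝ) * δ ≤ (n + 1) * δ := by nlinarith
          linarith
        have hstep : s - δ ≤ s' := by
          have := hmaxkey (c - n * δ)
          have harg : c - (n+1) * δ = c - n * δ - δ := by ring
          rw [hs', harg]; rw [hs]; linarith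
        have hs0 : 0 ≤ s := le_max_right _ _
        have hsc : s ≤ c := max_le (by nlinarith [hδ0.le]) hc0.le
        have := step s (s - s') hs0 hsc (by linarith) (by linarith) ih
        simpa using this
  obtain ⟨n, hn⟩ := exists_nat_gt (c / δ)
  have hcn : c - n * δ ≤ 0 := by
    rw [div_lt_iff₀ hδ0] at hn
    linarith
  have := main n
  rw [max_eq_right hcn] at this
  obtain ⟨R, hR1, hR0⟩ := this
  refine ⟨R, ?_, hR0⟩
  rw [zero_smul, zero_sub] at hR1
  exact hR1

end NormSection

section PosVec

variable {N : ℕ}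

/-- from the nonnegative right inverse we get a positive vector with negative image -/
private lemma pos_vec'' {A R : Matrix (Fin N) (Fin N) ℝ}
    (hR1 : (-A) * R = 1) (hR0 : ∀ i j, 0 ≤ R i j) :
    ∃ x : Fin N → ℝ, (∀ i, 0 < x i) ∧ ∀ i, (A *ᵥ x) i = -1 := by
  classical
  refine ⟨R *ᵥ (fun _ => 1), ?_, ?_⟩
  · intro i
    have hxi : (R *ᵥ (fun _ => 1)) i = ∑ j, R i j := by
      rw [Matrix.mulVec, dotProduct]
      simp
    rw [hxi]
    rcases (Finset.sum_nonneg fun j (_ : j ∈ Finset.univ) => hR0 i j).lt_or_eq with h | h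
    · exact h
    · exfalso
      have hzero : ∀ j ∈ Finset.univ, R i j = 0 :=
        (Finset.sum_eq_zero_iff_of_nonneg (fun j _ => hR0 i j)).mp h.symm
      have hcomm : R * (-A) = 1 := mul_eq_one_comm.mp hR1
      have h1 : (R * (-A)) i i = 1 := by rw [hcomm]; exact Matrix.one_apply_eq i
      rw [Matrix.mul_apply] at h1
      have : ∑ j, R i j * (-A) j i = 0 :=
        Finset.sum_eq_zero fun j hj => by rw [hzero j hj, zero_mul]
      rw [this] at h1
      exact one_ne_zero h1.symm
  · intro i
    have hAR : A * R = -1 := by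
      have : -(A * R) = 1 := by rw [← Matrix.neg_mul]; exact hR1
      linear_combination (norm := module) -this
    rw [Matrix.mulVec_mulVec, hAR]
    rw [Matrix.neg_mulVec]
    simp [Matrix.mulVec, dotProduct, Matrix.one_apply]

end PosVec

theorem stmt_8 (N : ℕ) (A : Matrix (Fin N) (Fin N) ℝ)
    (hMetzler : ∀ i j, i ≠ j → 0 ≤ A i j)
    (hHurwitz : ∀ μ ∈ spectrum ℂ (A.map (Complex.ofReal)), μ.re < 0) :
    ∃ d : Fin N → ℝ, (∀ i, 0 < d i) ∧
      ∀ x : Fin N → ℝ, x ≠ 0 →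
        x ⬝ᵥ ((Aᵀ * Matrix.diagonal d + Matrix.diagonal d * A).mulVec x) < 0 := by
  classical
  have hdetA : ∀ s : ℝ, 0 ≤ s → (s • (1 : Matrix (Fin N) (Fin N) ℝ) - A).det ≠ 0 :=
    fun s hs => det_ne_of_hurwitz'' hHurwitz hs
  have hdetAT : ∀ s : ℝ, 0 ≤ s → (s • (1 : Matrix (Fin N) (Fin N) ℝ) - Aᵀ).det ≠ 0 := by
    intro s hs
    have : (s • (1 : Matrix (Fin N) (Fin N) ℝ) - Aᵀ)
        = (s • (1 : Matrix (Fin N) (Fin N) ℝ) - A)ᵀ := by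
      rw [Matrix.transpose_sub, Matrix.transpose_smul, Matrix.transpose_one]
    rw [this, Matrix.det_transpose]
    exact hdetA s hs
  have hMetzlerT : ∀ i j, i ≠ j → 0 ≤ Aᵀ i j := fun i j hij => hMetzler j i (Ne.symm hij)
  obtain ⟨R, hR1, hR0⟩ := neg_inv_nonneg'' hMetzler hdetA
  obtain ⟨S, hS1, hS0⟩ := neg_inv_nonneg'' hMetzlerT hdetAT
  obtain ⟨x, hx, hAx⟩ := pos_vec'' hR1 hR0
  obtain ⟨z, hz, hATz⟩ := pos_vec'' hS1 hS0
  set d : Fin N → ℝ := fun i => z i / x i with hd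
  have hdpos : ∀ i, 0 < d i := fun i => div_pos (hz i) (hx i)
  refine ⟨d, hdpos, ?_⟩
  set Q : Matrix (Fin N) (Fin N) ℝ := Aᵀ * Matrix.diagonal d + Matrix.diagonal d * A with hQQ
  have hQapp : ∀ i j, Q i j = A j i * d j + d i * A i j := by
    intro i j
    rw [hQQ, Matrix.add_apply, Matrix.mul_diagonal, Matrix.diagonal_mul, Matrix.transpose_apply]
  have hsym : ∀ i j, Q i j = Q j i := by
    intro i j
    rw [hQapp, hQapp]
    ring
  have hoff : ∀ i j, i ≠ j → 0 ≤ Q i j := by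
    intro i j hij
    rw [hQapp]
    exact add_nonneg (mul_nonneg (hMetzler j i (Ne.symm hij)) (hdpos j).le)
      (mul_nonneg (hdpos i).le (hMetzler i j hij))
  have hdx : Matrix.diagonal d *ᵥ x = z := by
    funext i
    rw [Matrix.mulVec_diagonal, hd]
    exact div_mul_cancel₀ _ (hx i).ne'
  have hQx : ∀ i, (Q *ᵥ x) i < 0 := by
    intro i
    rw [hQQ, Matrix.add_mulVec]
    have h1 : ((Aᵀ * Matrix.diagonal d) *ᵥ x) i = -1 := by
      rw [← Matrix.mulVec_mulVec, hdx]
      exact hATz i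
    have h2 : ((Matrix.diagonal d * A) *ᵥ x) i = d i * (-1) := by
      rw [← Matrix.mulVec_mulVec, Matrix.mulVec_diagonal, hAx i]
    rw [Pi.add_apply, h1, h2]
    have := hdpos i
    nlinarith
  exact quad_neg'' hsym hoff hx hQx
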